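/- Let λ > 0 and for each k = 1,…,K let c_k, u_k > 0 with c_k ≠ u_k. Then the K-cache freshness F = 1 − (∏_k c_k ∏_k u_k / ∏_k (c_k − u_k)) · Σ_{p ∈ ∏_k {c_k, u_k}} (−1)^{S_c(p)} / (∏_k p_k · (1 + (Σ_k p_k)/λ)), where S_c(p) = #{k : p_k = c_k}, satisfies 0 ≤ F ≤ 1. -/

import Mathlib

open Finset

/-- Closed-form long-term average freshness of a file at the user in a
parallel `K`-cache system. The sum ranges over all `2^K` choice vectors
`s : Fin K → Bool`, where `s k = true` selects `p_k = c_k` and `s k = false`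
selects `p_k = u_k`, and `S_c(s)` counts the coordinates with `p_k = c_k`. -/
noncomputable def parallelFreshness (K : ℕ) (lam : ℝ) (c u : Fin K → ℝ) : ℝ :=
  1 - ((∏ k, c k) * (∏ k, u k) / ∏ k, (c k - u k)) *
    ∑ s : Fin K → Bool,
      (-1 : ℝ) ^ (univ.filter fun k => s k = true).card /
        ((∏ k, (if s k then c k else u k)) *
          (1 + (∑ k, (if s k then c k else u k)) / lam))

open Real Set MeasureTheory

lemma exp_integral_Ioi {b : ℝ} (hb : 0 < b) :
    ∫ x in Ioi (0:ℝ), Real.exp (-(b * x)) = 1 / b := by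
  have h := MeasureTheory.integral_comp_mul_left_Ioi (fun x => Real.exp (-x)) 0 hb
  simp only [mul_zero, smul_eq_mul] at h
  rw [show (fun x : ℝ => Real.exp (-(b * x))) = (fun x : ℝ => Real.exp (-(b * x))) from rfl]
  calc ∫ x in Ioi (0:ℝ), Real.exp (-(b * x)) = b⁻¹ * ∫ x in Ioi (0:ℝ), Real.exp (-x) := h
    _ = 1 / b := by rw [integral_exp_neg_Ioi_zero]; ring

lemma aux_mono {u c t : ℝ} (hu : 0 < u) (huc : u < c) (ht : 0 ≤ t) :
    u * exp (-(c * t)) ≤ c * exp (-(u * t)) ∧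
      c * exp (-(u * t)) - u * exp (-(c * t)) ≤ c - u := by
  have he : exp (-(c * t)) ≤ exp (-(u * t)) := by
    apply exp_le_exp.2; nlinarith
  constructor
  · nlinarith [exp_pos (-(c * t)), exp_pos (-(u * t))]
  · set f : ℝ → ℝ := fun x => c * exp (-(u * x)) - u * exp (-(c * x)) with hf
    have hd : ∀ x : ℝ, HasDerivAt f
        (c * (exp (-(u * x)) * -u) - u * (exp (-(c * x)) * -c)) x := by
      intro x
      have h1 : HasDerivAt (fun y : ℝ => -(u * y)) (-u) x := by
        exact ((hasDerivAt_id x).const_mul u).neg.congr_deriv (by ring)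
      have h2 : HasDerivAt (fun y : ℝ => -(c * y)) (-c) x := by
        exact ((hasDerivAt_id x).const_mul c).neg.congr_deriv (by ring)
      exact ((h1.exp.const_mul c).sub (h2.exp.const_mul u))
    have hanti : AntitoneOn f (Ici (0:ℝ)) := by
      apply antitoneOn_of_deriv_nonpos (convex_Ici 0)
      · exact Continuous.continuousOn (by fun_prop)
      · intro x _; exact (hd x).differentiableAt.differentiableWithinAt
      · intro x hx
        rw [(hd x).deriv]
        have hx0 : 0 ≤ x := le_of_lt (by simpa using hx)
        have he' : exp (-(c * x)) ≤ exp (-(u * x)) := by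
          apply exp_le_exp.2; nlinarith
        have hc : 0 < c := hu.trans huc
        nlinarith [mul_le_mul_of_nonneg_left he' (le_of_lt (mul_pos hu hc))]
    have := hanti (self_mem_Ici) ht ht
    simpa [hf] using this

lemma survival_bounds {c u t : ℝ} (hc : 0 < c) (hu : 0 < u) (hne : c ≠ u) (ht : 0 ≤ t) :
    0 ≤ (c * exp (-(u * t)) - u * exp (-(c * t))) / (c - u) ∧
      (c * exp (-(u * t)) - u * exp (-(c * t))) / (c - u) ≤ 1 := by
  rcases hne.lt_or_gt with h | h
  · -- c < u
    have key := aux_mono hc h ht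
    have hrw : (c * exp (-(u * t)) - u * exp (-(c * t))) / (c - u)
        = (u * exp (-(c * t)) - c * exp (-(u * t))) / (u - c) := by
      rw [← neg_div_neg_eq]; ring_nf
    rw [hrw]
    have hd : 0 < u - c := by linarith
    constructor
    · apply div_nonneg _ hd.le; linarith [key.1]
    · rw [div_le_one hd]; linarith [key.2]
  · -- u < c
    have key := aux_mono hu h ht
    have hd : 0 < c - u := by linarith
    constructor
    · apply div_nonneg _ hd.le; linarith [key.1]
    · rw [div_le_one hd]; linarith [key.2]


section scratch
variable {K : ℕ} (lam : ℝ) (c u : Fin K → ℝ)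

lemma expand_prod (t : ℝ) :
    (∏ k, (c k * exp (-(u k * t)) - u k * exp (-(c k * t))) / (c k - u k))
      = ∑ s : Fin K → Bool,
          (∏ k, ((if s k then -(u k) else c k) / (c k - u k)))
            * exp (-((∑ k, (if s k then c k else u k)) * t)) := by
  have h1 : ∀ k : Fin K, (c k * exp (-(u k * t)) - u k * exp (-(c k * t))) / (c k - u k)
      = ∑ b : Bool, ((if b then -(u k) else c k) / (c k - u k))
          * exp (-((if b then c k else u k) * t)) := by
    intro k; rw [Fintype.sum_bool]; simp; ring
  rw [Finset.prod_congr rfl (fun k _ => h1 k), Fintype.prod_sum]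
  apply Finset.sum_congr rfl
  intro s _
  rw [Finset.prod_mul_distrib]
  congr 1
  rw [← Real.exp_sum]
  congr 1
  rw [Finset.sum_mul, ← Finset.sum_neg_distrib]

end scratch

section scratch2
variable {K : ℕ} {lam : ℝ} {c u : Fin K → ℝ}

lemma coef_eq (s : Fin K → Bool) :
    (∏ k, ((if s k then -(u k) else c k) / (c k - u k)))
      = ((-1 : ℝ) ^ (univ.filter fun k => s k = true).card
          * ∏ k, (if s k then u k else c k)) / ∏ k, (c k - u k) := by
  rw [Finset.prod_div_distrib]
  congr 1
  have h1 : ∀ k : Fin K, (if s k then -(u k) else c k)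
      = (if s k then (-1 : ℝ) else 1) * (if s k then u k else c k) := by
    intro k; cases hsk : s k <;> simp
  rw [Finset.prod_congr rfl (fun k _ => h1 k), Finset.prod_mul_distrib]
  congr 1
  rw [← Finset.prod_filter_mul_prod_filter_not univ (fun k => s k = true)]
  rw [Finset.prod_congr rfl (fun k hk => if_pos (Finset.mem_filter.1 hk).2),
      Finset.prod_congr rfl (fun k hk => if_neg (by
        simpa using (Finset.mem_filter.1 hk).2))]
  simp [Finset.prod_const]

lemma prods_eq (s : Fin K → Bool) :
    (∏ k, c k) * (∏ k, u k)
      = (∏ k, (if s k then c k else u k)) * ∏ k, (if s k then u k else c k) := by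
  rw [← Finset.prod_mul_distrib, ← Finset.prod_mul_distrib]
  apply Finset.prod_congr rfl
  intro k _; cases hsk : s k <;> simp [mul_comm]

lemma per_term (hlam : 0 < lam) (hc : ∀ k, 0 < c k) (hu : ∀ k, 0 < u k)
    (hcu : ∀ k, c k ≠ u k) (s : Fin K → Bool) :
    lam * (∏ k, ((if s k then -(u k) else c k) / (c k - u k)))
        * (1 / (lam + ∑ k, (if s k then c k else u k)))
      = ((∏ k, c k) * (∏ k, u k) / ∏ k, (c k - u k)) *
          ((-1 : ℝ) ^ (univ.filter fun k => s k = true).card /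
            ((∏ k, (if s k then c k else u k)) *
              (1 + (∑ k, (if s k then c k else u k)) / lam))) := by
  have hP : (0:ℝ) ≤ ∑ k, (if s k then c k else u k) :=
    Finset.sum_nonneg fun k _ => by cases s k <;> simp [(hc k).le, (hu k).le]
  have hlP : lam + (∑ k, (if s k then c k else u k)) ≠ 0 := by positivity
  have hd : (∏ k, (c k - u k)) ≠ 0 :=
    Finset.prod_ne_zero_iff.2 fun k _ => sub_ne_zero.2 (hcu k)
  have hPp : (∏ k, (if s k then c k else u k)) ≠ 0 :=
    Finset.prod_ne_zero_iff.2 fun k _ => by cases s k <;> simp [(hc k).ne', (hu k).ne']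
  rw [coef_eq, prods_eq s,
    show 1 + (∑ k, (if s k then c k else u k)) / lam
        = (lam + ∑ k, (if s k then c k else u k)) / lam by field_simp]
  field_simp

end scratch2


noncomputable def auxP {K : ℕ} (c u : Fin K → ℝ) (s : Fin K → Bool) : ℝ :=
  ∑ k, (if s k then c k else u k)

noncomputable def auxCoef {K : ℕ} (c u : Fin K → ℝ) (s : Fin K → Bool) : ℝ :=
  ∏ k, ((if s k then -(u k) else c k) / (c k - u k))

noncomputable def auxG {K : ℕ} (lam : ℝ) (c u : Fin K → ℝ) (t : ℝ) : ℝ :=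
  lam * exp (-(lam * t)) *
    ∏ k, (c k * exp (-(u k * t)) - u k * exp (-(c k * t))) / (c k - u k)

noncomputable def auxF {K : ℕ} (lam : ℝ) (c u : Fin K → ℝ) (t : ℝ) : ℝ :=
  ∑ s : Fin K → Bool, (lam * auxCoef c u s) * exp (-((lam + auxP c u s) * t))

lemma intaux {b : ℝ} (hb : 0 < b) (a : ℝ) :
    IntegrableOn (fun t : ℝ => a * exp (-(b * t))) (Ioi (0:ℝ)) := by
  have h := exp_neg_integrableOn_Ioi 0 hb
  simp only [neg_mul] at h
  exact h.const_mul a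

theorem parallelFreshness_main (K : ℕ) (lam : ℝ) (c u : Fin K → ℝ)
    (hlam : 0 < lam) (hc : ∀ k, 0 < c k) (hu : ∀ k, 0 < u k)
    (hcu : ∀ k, c k ≠ u k) :
    0 ≤ parallelFreshness K lam c u ∧ parallelFreshness K lam c u ≤ 1 := by
  have hP0 : ∀ s, (0:ℝ) ≤ auxP c u s := fun s =>
    Finset.sum_nonneg fun k _ => by cases s k <;> simp [(hc k).le, (hu k).le]
  have hlP : ∀ s, (0:ℝ) < lam + auxP c u s := fun s => by have := hP0 s; linarith
  have hGF : auxG lam c u = auxF lam c u := by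
    funext t
    rw [auxG, auxF]
    rw [expand_prod c u t, Finset.mul_sum]
    apply Finset.sum_congr rfl
    intro s _
    rw [show -((lam + auxP c u s) * t) = -(lam * t) + -(auxP c u s * t) by ring,
      Real.exp_add, auxCoef, auxP]
    ring
  have hint : ∀ s : Fin K → Bool,
      IntegrableOn (fun t => (lam * auxCoef c u s) * exp (-((lam + auxP c u s) * t)))
        (Ioi (0:ℝ)) := by
    intro s
    exact intaux (hlP s) _
  have hintF : IntegrableOn (auxF lam c u) (Ioi (0:ℝ)) := by
    have := MeasureTheory.integrable_finset_sum (μ := volume.restrict (Ioi (0:ℝ)))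
      (univ : Finset (Fin K → Bool)) (fun s _ => hint s)
    exact this.congr (by filter_upwards with t; rw [auxF])
  have hintG : IntegrableOn (auxG lam c u) (Ioi (0:ℝ)) := hGF ▸ hintF
  have hintE : IntegrableOn (fun t : ℝ => lam * exp (-(lam * t))) (Ioi (0:ℝ)) :=
    intaux hlam lam
  have hIval : (∫ t in Ioi (0:ℝ), auxG lam c u t) =
      ∑ s : Fin K → Bool, (lam * auxCoef c u s) * (1 / (lam + auxP c u s)) := by
    rw [hGF]
    simp only [auxF]
    rw [MeasureTheory.integral_finset_sum _ (fun s _ => hint s)]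
    apply Finset.sum_congr rfl
    intro s _
    rw [MeasureTheory.integral_const_mul, exp_integral_Ioi (hlP s)]
  have hkey : (∫ t in Ioi (0:ℝ), auxG lam c u t) = 1 - parallelFreshness K lam c u := by
    rw [hIval, parallelFreshness]
    rw [Finset.mul_sum]
    have heach : ∀ s : Fin K → Bool, (lam * auxCoef c u s) * (1 / (lam + auxP c u s))
        = ((∏ k, c k) * (∏ k, u k) / ∏ k, (c k - u k)) *
            ((-1 : ℝ) ^ (univ.filter fun k => s k = true).card /
              ((∏ k, (if s k then c k else u k)) *
                (1 + (∑ k, (if s k then c k else u k)) / lam))) := by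
      intro s
      rw [auxCoef, auxP]
      exact per_term hlam hc hu hcu s
    rw [Finset.sum_congr rfl (fun s _ => heach s)]
    ring
  have hGnn : ∀ t ∈ Ioi (0:ℝ), 0 ≤ auxG lam c u t := by
    intro t ht
    have ht' : (0:ℝ) ≤ t := (le_of_lt ht)
    rw [auxG]
    apply mul_nonneg (by positivity)
    exact Finset.prod_nonneg fun k _ =>
      (survival_bounds (hc k) (hu k) (hcu k) ht').1
  have hGle : ∀ t ∈ Ioi (0:ℝ), auxG lam c u t ≤ lam * exp (-(lam * t)) := by
    intro t ht
    have ht' : (0:ℝ) ≤ t := (le_of_lt ht)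
    have h1 : (∏ k, (c k * exp (-(u k * t)) - u k * exp (-(c k * t))) / (c k - u k)) ≤ 1 :=
      Finset.prod_le_one
        (fun k _ => (survival_bounds (hc k) (hu k) (hcu k) ht').1)
        (fun k _ => (survival_bounds (hc k) (hu k) (hcu k) ht').2)
    rw [auxG]
    calc lam * exp (-(lam * t)) *
          (∏ k, (c k * exp (-(u k * t)) - u k * exp (-(c k * t))) / (c k - u k))
        ≤ lam * exp (-(lam * t)) * 1 := by
          apply mul_le_mul_of_nonneg_left h1 (by positivity)
      _ = lam * exp (-(lam * t)) := by ring
  have hEint : (∫ t in Ioi (0:ℝ), lam * exp (-(lam * t))) = 1 := by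
    rw [MeasureTheory.integral_const_mul, exp_integral_Ioi hlam]
    field_simp
  have hlow : (0:ℝ) ≤ ∫ t in Ioi (0:ℝ), auxG lam c u t :=
    MeasureTheory.setIntegral_nonneg measurableSet_Ioi hGnn
  have hhigh : (∫ t in Ioi (0:ℝ), auxG lam c u t) ≤ 1 := by
    rw [← hEint]
    exact MeasureTheory.setIntegral_mono_on hintG hintE measurableSet_Ioi hGle
  constructor
  · linarith
  · linarith

/-- The `K`-cache freshness formula takes values in `[0, 1]`. -/
theorem parallelFreshness_mem_unit_interval (K : ℕ) (lam : ℝ) (c u : Fin K → ℝ)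
    (hlam : 0 < lam) (hc : ∀ k, 0 < c k) (hu : ∀ k, 0 < u k)
    (hcu : ∀ k, c k ≠ u k) :
    0 ≤ parallelFreshness K lam c u ∧ parallelFreshness K lam c u ≤ 1 :=
  parallelFreshness_main K lam c u hlam hc hu hcu
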